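/- Consider ℝⁿ with brackets [e_n, e_i] = α_i e_i for 1 ≤ i ≤ n−1 and [e_i,e_j] = 0 for 1 ≤ i < j ≤ n−1, where (α₁,…,α_{n−1}) ∈ ℝ^{n−1}, and the inner product making {e₁,…,e_n} orthonormal. Then this is a solvable Lie algebra whose inner product is cyclic, and it is unimodular if and only if α₁ + ⋯ + α_{n−1} = 0. -/

import Mathlib

/-- The Lie algebra with orthonormal basis `{e₁,…,e_n}` and brackets
`[e_n, e_i] = α_i e_i` (`1 ≤ i ≤ n−1`), `[e_i,e_j] = 0` (`i,j ≤ n−1`) is solvable, its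
inner product is cyclic, and it is unimodular iff `α₁ + ⋯ + α_{n−1} = 0`. -/
theorem G_n_alpha_solvable_cyclic_unimodular_iff {L : Type*} [LieRing L] [LieAlgebra ℝ L]
    [FiniteDimensional ℝ L] {n : ℕ}
    (ip : L →ₗ[ℝ] L →ₗ[ℝ] ℝ)
    (hsymm : ∀ x y : L, ip x y = ip y x)
    (hpos : ∀ x : L, x ≠ 0 → 0 < ip x x)
    (e : Module.Basis (Fin (n + 1)) ℝ L)
    (horth : ∀ i j, ip (e i) (e j) = if i = j then 1 else 0)
    (α : Fin n → ℝ)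
    (hbr : ∀ i : Fin n, ⁅e (Fin.last n), e i.castSucc⁆ = α i • e i.castSucc)
    (hab : ∀ i j : Fin n, ⁅e i.castSucc, e j.castSucc⁆ = 0) :
    LieAlgebra.IsSolvable L ∧
      (∀ X Y Z : L, ip ⁅X, Y⁆ Z + ip ⁅Y, Z⁆ X + ip ⁅Z, X⁆ Y = 0) ∧
      ((∀ X : L, LinearMap.trace ℝ L (LieAlgebra.ad ℝ L X) = 0) ↔ ∑ i, α i = 0) := by
  have hlast : ∀ i : Fin n, ⁅e i.castSucc, e (Fin.last n)⁆ = -(α i • e i.castSucc) := by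
    intro i; rw [← lie_skew, hbr]
  -- the abelian ideal spanned by the first n basis vectors
  set A : Submodule ℝ L := Submodule.span ℝ (Set.range fun i : Fin n => e i.castSucc) with hA
  have hgen : ∀ i : Fin n, e i.castSucc ∈ A := fun i =>
    Submodule.subset_span ⟨i, rfl⟩
  have hbrA : ∀ (i : Fin (n + 1)) (y : L), ⁅e i, y⁆ ∈ A := by
    intro i y
    have hy : y ∈ Submodule.span ℝ (Set.range e) := by rw [e.span_eq]; trivial
    induction hy using Submodule.span_induction with
    | mem x hx =>
      obtain ⟨j, rfl⟩ := hx
      rcases Fin.eq_castSucc_or_eq_last i with ⟨a, rfl⟩ | rfl <;>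
      rcases Fin.eq_castSucc_or_eq_last j with ⟨b, rfl⟩ | rfl <;>
      simp [hbr, hab, hlast, A.zero_mem, A.smul_mem, A.neg_mem, hgen]
    | zero => simp [A.zero_mem]
    | add u v _ _ hu hv => rw [lie_add]; exact A.add_mem hu hv
    | smul t u _ hu => rw [lie_smul]; exact A.smul_mem t hu
  have hmemA : ∀ x y : L, ⁅x, y⁆ ∈ A := by
    intro x y
    have hx : x ∈ Submodule.span ℝ (Set.range e) := by rw [e.span_eq]; trivial
    induction hx using Submodule.span_induction with
    | mem u hu => obtain ⟨j, rfl⟩ := hu; exact hbrA j y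
    | zero => simp [A.zero_mem]
    | add u v _ _ hu hv => rw [add_lie]; exact A.add_mem hu hv
    | smul t u _ hu => rw [smul_lie]; exact A.smul_mem t hu
  have habA : ∀ x ∈ A, ∀ y ∈ A, ⁅x, y⁆ = 0 := by
    intro x hx y hy
    induction hx using Submodule.span_induction with
    | mem u hu =>
      obtain ⟨i, rfl⟩ := hu
      induction hy using Submodule.span_induction with
      | mem v hv => obtain ⟨j, rfl⟩ := hv; exact hab i j
      | zero => simp
      | add u v _ _ hu hv => rw [lie_add, hu, hv, add_zero]
      | smul t u _ hu => rw [lie_smul, hu, smul_zero]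
    | zero => simp
    | add u v _ _ hu hv => rw [add_lie, hu, hv, add_zero]
    | smul t u _ hu => rw [smul_lie, hu, smul_zero]
  refine ⟨?_, ?_, ?_⟩
  · -- solvable
    refine (LieAlgebra.isSolvable_iff ℝ L).mpr ⟨2, ?_⟩
    have hD : ∀ m : L, m ∈ LieAlgebra.derivedSeries ℝ L 1 → m ∈ A := by
      intro m hm
      have h1 : LieAlgebra.derivedSeries ℝ L 1 =
          ⁅(⊤ : LieIdeal ℝ L), (⊤ : LieIdeal ℝ L)⁆ := by
        rw [LieAlgebra.derivedSeries_def, LieAlgebra.derivedSeriesOfIdeal_succ,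
          LieAlgebra.derivedSeriesOfIdeal_zero]
      rw [h1, ← LieSubmodule.mem_toSubmodule,
        LieSubmodule.lieIdeal_oper_eq_linear_span'] at hm
      refine Submodule.span_le.2 ?_ hm
      rintro _ ⟨x, -, y, -, rfl⟩
      exact hmemA x y
    have : LieAlgebra.derivedSeries ℝ L 2 =
        ⁅LieAlgebra.derivedSeries ℝ L 1, LieAlgebra.derivedSeries ℝ L 1⁆ := by
      rw [LieAlgebra.derivedSeries_def, LieAlgebra.derivedSeriesOfIdeal_succ]
    rw [this, LieSubmodule.lie_eq_bot_iff]
    intro x hx m hm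
    exact habA x (hD x hx) m (hD m hm)
  · -- cyclic
    have key : ∀ i j k : Fin (n + 1),
        ip ⁅e i, e j⁆ (e k) + ip ⁅e j, e k⁆ (e i) + ip ⁅e k, e i⁆ (e j) = 0 := by
      intro i j k
      rcases Fin.eq_castSucc_or_eq_last i with ⟨a, rfl⟩ | rfl <;>
      rcases Fin.eq_castSucc_or_eq_last j with ⟨b, rfl⟩ | rfl <;>
      rcases Fin.eq_castSucc_or_eq_last k with ⟨c, rfl⟩ | rfl <;>
      simp [hbr, hab, hlast, horth, Fin.castSucc_inj, (Fin.castSucc_lt_last _).ne] <;>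
      (split_ifs <;> simp_all)
    set br : L →ₗ[ℝ] L →ₗ[ℝ] L :=
      LinearMap.mk₂ ℝ (fun x y : L => ⁅x, y⁆) add_lie smul_lie lie_add lie_smul with hbrdef
    set T1 : L →ₗ[ℝ] L →ₗ[ℝ] L →ₗ[ℝ] ℝ := br.compr₂ ip with hT1
    set T2 : L →ₗ[ℝ] L →ₗ[ℝ] L →ₗ[ℝ] ℝ := (LinearMap.lflip.comp T1).flip with hT2
    set T3 : L →ₗ[ℝ] L →ₗ[ℝ] L →ₗ[ℝ] ℝ := (LinearMap.lflip.comp T2).flip with hT3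
    have happly : ∀ x y z : L, (T1 + T2 + T3) x y z =
        ip ⁅x, y⁆ z + ip ⁅y, z⁆ x + ip ⁅z, x⁆ y := by
      intro x y z
      simp [hT1, hT2, hT3, hbrdef, LinearMap.compr₂_apply, LinearMap.flip_apply,
        LinearMap.lflip_apply]
    have hzero : T1 + T2 + T3 = 0 :=
      e.ext fun i => e.ext fun j => e.ext fun k => by
        have := key i j k
        rw [← happly (e i) (e j) (e k)] at this
        simpa using this
    intro X Y Z
    rw [← happly X Y Z, hzero]
    simp
  · -- unimodular iff
    have tr_cast : ∀ a : Fin n,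
        LinearMap.trace ℝ L (LieAlgebra.ad ℝ L (e a.castSucc)) = 0 := by
      intro a
      rw [LinearMap.trace_eq_matrix_trace ℝ e, Matrix.trace]
      rw [Finset.sum_eq_zero]
      intro j _
      rcases Fin.eq_castSucc_or_eq_last j with ⟨b, rfl⟩ | rfl <;>
      simp [LinearMap.toMatrix_apply, LieAlgebra.ad_apply, hab, hlast,
        Finsupp.single_apply, (Fin.castSucc_lt_last _).ne, Matrix.diag]
    have tr_last :
        LinearMap.trace ℝ L (LieAlgebra.ad ℝ L (e (Fin.last n))) = ∑ i, α i := by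
      rw [LinearMap.trace_eq_matrix_trace ℝ e, Matrix.trace, Fin.sum_univ_castSucc]
      have h1 : ∀ b : Fin n,
          (LinearMap.toMatrix e e (LieAlgebra.ad ℝ L (e (Fin.last n)))).diag b.castSucc
            = α b := by
        intro b
        simp [LinearMap.toMatrix_apply, LieAlgebra.ad_apply, hbr, Finsupp.single_apply,
          Matrix.diag]
      have h2 : (LinearMap.toMatrix e e
          (LieAlgebra.ad ℝ L (e (Fin.last n)))).diag (Fin.last n) = 0 := by
        simp [LinearMap.toMatrix_apply, LieAlgebra.ad_apply, Matrix.diag]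
      rw [h2, add_zero, Finset.sum_congr rfl fun b _ => h1 b]
    constructor
    · intro h
      rw [← tr_last]; exact h _
    · intro hsum X
      set μ : L →ₗ[ℝ] ℝ :=
        (LinearMap.trace ℝ L).comp (LieAlgebra.ad ℝ L : L →ₗ[ℝ] Module.End ℝ L)
        with hμ
      have hμ0 : μ = 0 := e.ext fun i => by
        rcases Fin.eq_castSucc_or_eq_last i with ⟨a, rfl⟩ | rfl
        · simpa [hμ] using tr_cast a
        · simp only [hμ, LinearMap.comp_apply, LieHom.coe_toLinearMap,
            LinearMap.zero_apply]
          rw [tr_last]; exact hsum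
      have : μ X = 0 := by rw [hμ0]; rfl
      simpa [hμ] using this
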